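/- For τ ∈ (0,1) and 0 < ε ≤ (1/2)·min(τ,1-τ), the capacity C_{τ,ε} of the binary asymmetric channel satisfies C_{τ,ε} ≤ ε²/(ln 2·τ·(1-τ)). -/

import Mathlib

noncomputable def binEntropy (x : ℝ) : ℝ :=
  -(x * Real.logb 2 x) - (1 - x) * Real.logb 2 (1 - x)

lemma binEntropy_eq (x : ℝ) : binEntropy x = Real.binEntropy x / Real.log 2 := by
  unfold binEntropy Real.binEntropy
  rw [Real.log_inv, Real.log_inv]
  unfold Real.logb
  ring

noncomputable def capacity (τ ε : ℝ) : ℝ :=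
  sSup {y | ∃ q ∈ Set.Icc (0 : ℝ) 1,
    y = binEntropy ((1 - q) * (τ - ε) + q * (τ + ε))
        - (1 - q) * binEntropy (τ - ε) - q * binEntropy (τ + ε)}

lemma key_convex (τ ε : ℝ) (hτ0 : 0 < τ) (hτ1 : τ < 1)
    (hε0 : 0 < ε) (hε1 : 2*ε ≤ τ) (hε2 : 2*ε ≤ 1 - τ) :
    ConvexOn ℝ (Set.Icc (τ-ε) (τ+ε))
      (fun x => Real.binEntropy x + (τ*(1-τ))⁻¹ * x^2) := by
  set c : ℝ := (τ*(1-τ))⁻¹ with hc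
  apply convexOn_of_hasDerivWithinAt2_nonneg (f' := fun x => Real.log (1-x) - Real.log x + c*(2*x))
    (f'' := fun x => -(1-x)⁻¹ - x⁻¹ + c*2) (convex_Icc _ _)
  · exact (Real.binEntropy_continuous.add (by continuity)).continuousOn
  · intro x hx
    rw [interior_Icc] at hx
    have hx0 : 0 < x := by linarith [hx.1]
    have hx1 : x < 1 := by linarith [hx.2]
    have h1 : HasDerivAt Real.binEntropy (Real.log (1-x) - Real.log x) x :=
      Real.hasDerivAt_binEntropy hx0.ne' hx1.ne
    have h2 : HasDerivAt (fun x : ℝ => c * x^2) (c*(2*x)) x := by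
      have := (hasDerivAt_pow 2 x).const_mul c
      simpa using this.congr_deriv (by ring)
    exact ((h1.add h2).hasDerivWithinAt)
  · intro x hx
    rw [interior_Icc] at hx
    have hx0 : 0 < x := by linarith [hx.1]
    have hx1 : x < 1 := by linarith [hx.2]
    have h1 : HasDerivAt (fun y : ℝ => Real.log (1-y)) (-(1-x)⁻¹) x := by
      have hne : (1:ℝ) - x ≠ 0 := by linarith
      have := (Real.hasDerivAt_log hne).comp x ((hasDerivAt_id x).const_sub 1)
      exact this.congr_deriv (by ring)
    have h2 : HasDerivAt (fun y : ℝ => Real.log y) x⁻¹ x := Real.hasDerivAt_log hx0.ne'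
    have h3 : HasDerivAt (fun y : ℝ => c*(2*y)) (c*2) x := by
      have := (hasDerivAt_id x).const_mul (c*2)
      simpa [mul_assoc] using this.congr_deriv (by ring)
    exact (((h1.sub h2).add h3).hasDerivWithinAt)
  · intro x hx
    rw [interior_Icc] at hx
    have hx0 : 0 < x := by linarith [hx.1]
    have hx1 : x < 1 := by linarith [hx.2]
    have hkey : τ*(1-τ) ≤ 2*(x*(1-x)) := by
      rcases le_total x τ with h | h
      · nlinarith [hx.1]
      · nlinarith [hx.2]
    have hpos : 0 < τ*(1-τ) := by nlinarith
    have hxx : 0 < x*(1-x) := by nlinarith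
    have h1 : (1:ℝ)/(x*(1-x)) ≤ 2/(τ*(1-τ)) := by
      rw [div_le_div_iff₀ hxx hpos]; nlinarith
    have hne1 : (1:ℝ) - x ≠ 0 := by linarith
    have hexp : (1-x)⁻¹ + x⁻¹ = 1/(x*(1-x)) := by
      field_simp; ring
    have hc2 : c*2 = 2/(τ*(1-τ)) := by rw [hc]; field_simp
    linarith [h1, hexp, hc2]

theorem capacity_upper_bound (τ ε : ℝ) (hτ0 : 0 < τ) (hτ1 : τ < 1)
    (hε0 : 0 < ε) (hε : ε ≤ (1/2) * min τ (1 - τ)) :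
    capacity τ ε ≤ ε ^ 2 / (Real.log 2 * τ * (1 - τ)) := by
  have hε1 : 2*ε ≤ τ := by have := min_le_left τ (1-τ); linarith [hε.trans (by linarith : (1/2) * min τ (1-τ) ≤ (1/2)*τ)]
  have hε2 : 2*ε ≤ 1 - τ := by have := min_le_right τ (1-τ); nlinarith
  have hL : 0 < Real.log 2 := Real.log_pos (by norm_num)
  have hpos : 0 < τ*(1-τ) := by nlinarith
  have hRHS : 0 ≤ ε ^ 2 / (Real.log 2 * τ * (1 - τ)) := div_nonneg (by positivity) (by nlinarith)
  apply Real.sSup_le _ hRHS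
  rintro y ⟨q, ⟨hq0, hq1⟩, rfl⟩
  have hconv := key_convex τ ε hτ0 hτ1 hε0 hε1 hε2
  have ha : (τ-ε) ∈ Set.Icc (τ-ε) (τ+ε) := by constructor <;> linarith
  have hb : (τ+ε) ∈ Set.Icc (τ-ε) (τ+ε) := by constructor <;> linarith
  have h1q : (0:ℝ) ≤ 1 - q := by linarith
  have hcomb := hconv.2 ha hb h1q hq0 (by ring)
  simp only [smul_eq_mul] at hcomb
  set c : ℝ := (τ*(1-τ))⁻¹ with hc
  set a := τ - ε
  set b := τ + ε
  set x := (1-q)*a + q*b with hx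
  have hcpos : 0 < c := by positivity
  have hmain : Real.binEntropy x - (1-q)*Real.binEntropy a - q*Real.binEntropy b
      ≤ ε^2 / (τ*(1-τ)) := by
    have h4 : (1-q)*a^2 + q*b^2 - x^2 = q*(1-q)*(2*ε)^2 := by rw [hx]; ring
    have h6 : ε^2/(τ*(1-τ)) = c * ε^2 := by rw [hc]; field_simp
    rw [h6]
    have h7 : Real.binEntropy x - (1-q)*Real.binEntropy a - q*Real.binEntropy b
        ≤ c * ((1-q)*a^2 + q*b^2 - x^2) := by nlinarith [hcomb]
    rw [h4] at h7
    refine h7.trans (mul_le_mul_of_nonneg_left ?_ hcpos.le)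
    nlinarith [sq_nonneg (2*q-1), sq_nonneg ε]
  rw [binEntropy_eq, binEntropy_eq, binEntropy_eq]
  have heq : ε ^ 2 / (Real.log 2 * τ * (1 - τ)) = (ε^2/(τ*(1-τ)))/Real.log 2 := by
    rw [div_div]; ring_nf
  rw [heq]
  rw [show Real.binEntropy x / Real.log 2 - (1-q)*(Real.binEntropy a / Real.log 2)
      - q*(Real.binEntropy b / Real.log 2)
      = (Real.binEntropy x - (1-q)*Real.binEntropy a - q*Real.binEntropy b)/Real.log 2 by ring]
  gcongr
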